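/- Fix λ > 0, γ ≥ 0 and p a probability distribution on ℝ^d with bounded support. Let U*_{λ'} denote the unique positive definite solution of E[(U x xᵀ U)/‖U x‖·1{x≠0}] + λ'U = I, and let W*_{γ,λ} denote the unique positive definite solution of E[(W x xᵀ W)/(1+γ‖W x‖)] + λW = I. Then γ²·(U*_{γλ})² ⪯ (W*_{γ,λ})² ⪯ 16(1+γ)²·(U*_{(1+γ)λ})². -/

import Mathlib

open MeasureTheory Matrix
open scoped Classical

/-- Euclidean norm on `Fin d → ℝ`. -/
noncomputable def enorm' {d : ℕ} (v : Fin d → ℝ) : ℝ := Real.sqrt (∑ i, (v i)^2)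

/-- Euclidean inner product on `Fin d → ℝ`. -/
noncomputable def einner' {d : ℕ} (v w : Fin d → ℝ) : ℝ := ∑ i, v i * w i

/-- Operator (spectral) norm of a real matrix. -/
noncomputable def opNorm {d : ℕ} (M : Matrix (Fin d) (Fin d) ℝ) : ℝ :=
  ‖(Matrix.toEuclideanCLM (𝕜 := ℝ) M :
      EuclideanSpace ℝ (Fin d) →L[ℝ] EuclideanSpace ℝ (Fin d))‖

/-- Positive semidefinite square root (junk value `0` on non-PSD matrices). -/
noncomputable def psqrt {d : ℕ} (A : Matrix (Fin d) (Fin d) ℝ) : Matrix (Fin d) (Fin d) ℝ :=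
  if h : A.PosSemidef then
    (h.1.eigenvectorUnitary : Matrix (Fin d) (Fin d) ℝ) *
      diagonal ((↑) ∘ (Real.sqrt ·) ∘ h.1.eigenvalues) *
      (star h.1.eigenvectorUnitary : Matrix (Fin d) (Fin d) ℝ)
  else 0

/-- Entrywise expectation of a matrix-valued function. -/
noncomputable def mExp {d : ℕ} (p : Measure (Fin d → ℝ))
    (f : (Fin d → ℝ) → Matrix (Fin d) (Fin d) ℝ) : Matrix (Fin d) (Fin d) ℝ :=
  Matrix.of fun i j => ∫ x, f x i j ∂p

/-- The LDP operator `F(U) = E[(U x xᵀ U)/‖U x‖ · 1{x ≠ 0}] + λ U`. -/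
noncomputable def FLDP {d : ℕ} (p : Measure (Fin d → ℝ)) (lam : ℝ)
    (U : Matrix (Fin d) (Fin d) ℝ) : Matrix (Fin d) (Fin d) ℝ :=
  mExp p (fun x => if x = 0 then 0
    else (enorm' (U.mulVec x))⁻¹ • vecMulVec (U.mulVec x) (U.mulVec x)) + lam • U

/-- The DP operator `G(W) = E[(W x xᵀ W)/(1 + γ‖W x‖)] + λ W`. -/
noncomputable def FJDP {d : ℕ} (p : Measure (Fin d → ℝ)) (γ lam : ℝ)
    (W : Matrix (Fin d) (Fin d) ℝ) : Matrix (Fin d) (Fin d) ℝ :=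
  mExp p (fun x => (1 + γ * enorm' (W.mulVec x))⁻¹ • vecMulVec (W.mulVec x) (W.mulVec x))
    + lam • W

/-- `sym(A) = (Aᵀ A)^{1/2}`. -/
noncomputable def symMat {d : ℕ} (A : Matrix (Fin d) (Fin d) ℝ) : Matrix (Fin d) (Fin d) ℝ :=
  psqrt (Aᵀ * A)

/-- Smallest eigenvalue of a Hermitian matrix (junk value `0` otherwise). -/
noncomputable def lmin {d : ℕ} (A : Matrix (Fin d) (Fin d) ℝ) : ℝ :=
  if h : A.IsHermitian then ⨅ i, h.eigenvalues i else 0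

/-- Largest eigenvalue of a Hermitian matrix (junk value `0` otherwise). -/
noncomputable def lmax {d : ℕ} (A : Matrix (Fin d) (Fin d) ℝ) : ℝ :=
  if h : A.IsHermitian then ⨆ i, h.eigenvalues i else 0

section aux
variable {d : ℕ}

lemma dot_self_nonneg' (v : Fin d → ℝ) : 0 ≤ v ⬝ᵥ v :=
  Finset.sum_nonneg fun i _ => mul_self_nonneg _

lemma dot_sq_le (v w : Fin d → ℝ) : (v ⬝ᵥ w)^2 ≤ (v ⬝ᵥ v) * (w ⬝ᵥ w) := by
  simpa [dotProduct, pow_two] using Finset.sum_mul_sq_le_sq_mul_sq Finset.univ v w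

lemma enorm'_sq (v : Fin d → ℝ) : enorm' v ^ 2 = v ⬝ᵥ v := by
  rw [enorm', Real.sq_sqrt (Finset.sum_nonneg fun i _ => sq_nonneg _)]
  simp [dotProduct, pow_two]

lemma enorm'_nonneg (v : Fin d → ℝ) : 0 ≤ enorm' v := Real.sqrt_nonneg _

lemma sq_le_imp_le {a b : ℝ} (_ : 0 ≤ a) (hb : 0 ≤ b) (h : a^2 ≤ b^2) : a ≤ b := by
  nlinarith

lemma dot_sym {A : Matrix (Fin d) (Fin d) ℝ} (hA : Aᵀ = A) (v w : Fin d → ℝ) :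
    v ⬝ᵥ (A *ᵥ w) = (A *ᵥ v) ⬝ᵥ w := by
  rw [dotProduct_mulVec, ← mulVec_transpose, hA]

end aux

section herm
variable {d : ℕ}

lemma herm_of_transpose {A : Matrix (Fin d) (Fin d) ℝ} (h : Aᵀ = A) : A.IsHermitian := by
  unfold Matrix.IsHermitian
  ext i j
  rw [Matrix.conjTranspose_apply]
  calc star (A j i) = A j i := star_trivial _
    _ = Aᵀ i j := rfl
    _ = A i j := by rw [h]

lemma transpose_of_herm {A : Matrix (Fin d) (Fin d) ℝ} (h : A.IsHermitian) : Aᵀ = A := by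
  ext i j
  have := congrFun (congrFun h i) j
  simpa [Matrix.conjTranspose_apply] using this

lemma inner_eq_dot (x y : EuclideanSpace ℝ (Fin d)) :
    (inner ℝ x y : ℝ) = (x : Fin d → ℝ) ⬝ᵥ (y : Fin d → ℝ) := by
  rw [EuclideanSpace.inner_eq_star_dotProduct, star_trivial, dotProduct_comm]

/-- Rayleigh upper bound via eigen expansion. -/
lemma rayleigh_bound {M : Matrix (Fin d) (Fin d) ℝ} (hM : M.IsHermitian) (t : ℝ)
    (ht : ∀ i, hM.eigenvalues i ≤ t) (z : Fin d → ℝ) :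
    z ⬝ᵥ M *ᵥ z ≤ t * (z ⬝ᵥ z) := by
  classical
  set b := hM.eigenvectorBasis with hb
  set z' : EuclideanSpace ℝ (Fin d) := WithLp.toLp 2 z with hz'
  have hMz : (M *ᵥ z : Fin d → ℝ) = (WithLp.toLp 2 (M *ᵥ z) : EuclideanSpace ℝ (Fin d)) := rfl
  have key1 : z ⬝ᵥ M *ᵥ z = ∑ i, hM.eigenvalues i * ((inner ℝ (b i) z' : ℝ))^2 := by
    have h1 : z ⬝ᵥ M *ᵥ z = (inner ℝ z' (WithLp.toLp 2 (M *ᵥ z) : EuclideanSpace ℝ (Fin d)) : ℝ) := by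
      rw [inner_eq_dot]
    rw [h1, ← OrthonormalBasis.sum_inner_mul_inner b z' (WithLp.toLp 2 (M *ᵥ z) : EuclideanSpace ℝ (Fin d))]
    apply Finset.sum_congr rfl
    intro i _
    have h2 : (inner ℝ (b i) (WithLp.toLp 2 (M *ᵥ z) : EuclideanSpace ℝ (Fin d)) : ℝ)
        = hM.eigenvalues i * (inner ℝ (b i) z' : ℝ) := by
      rw [inner_eq_dot, inner_eq_dot]
      have h3 : (b i : Fin d → ℝ) ⬝ᵥ (M *ᵥ z) = (M *ᵥ (b i : Fin d → ℝ)) ⬝ᵥ z :=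
        dot_sym (transpose_of_herm hM) _ _
      have h4 : M *ᵥ (b i : Fin d → ℝ) = hM.eigenvalues i • (b i : Fin d → ℝ) :=
        hM.mulVec_eigenvectorBasis i
      rw [h3, h4]
      show (hM.eigenvalues i • (b i : Fin d → ℝ)) ⬝ᵥ z = _
      rw [smul_dotProduct]
      rfl
    rw [h2, inner_eq_dot, inner_eq_dot, dotProduct_comm (z' : Fin d → ℝ) (b i : Fin d → ℝ)]
    ring
  have key2 : z ⬝ᵥ z = ∑ i, ((inner ℝ (b i) z' : ℝ))^2 := by
    have h1 : z ⬝ᵥ z = (inner ℝ z' z' : ℝ) := by rw [inner_eq_dot]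
    rw [h1, ← OrthonormalBasis.sum_inner_mul_inner b z' z']
    apply Finset.sum_congr rfl
    intro i _
    rw [real_inner_comm z' (b i)]
    ring
  rw [key1, key2, Finset.mul_sum]
  apply Finset.sum_le_sum
  intro i _
  exact mul_le_mul_of_nonneg_right (ht i) (sq_nonneg _)

end herm

section spectral
variable {d : ℕ}

/-- Top eigenvalue data for a real symmetric matrix. -/
lemma exists_top_eigen [Nonempty (Fin d)] {M : Matrix (Fin d) (Fin d) ℝ}
    (hM : M.IsHermitian) :
    ∃ (μ : ℝ) (w : Fin d → ℝ), M *ᵥ w = μ • w ∧ w ⬝ᵥ w = 1 ∧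
      ∀ z : Fin d → ℝ, z ⬝ᵥ M *ᵥ z ≤ μ * (z ⬝ᵥ z) := by
  obtain ⟨i0, hi0⟩ := Finite.exists_max hM.eigenvalues
  refine ⟨hM.eigenvalues i0, (hM.eigenvectorBasis i0 : Fin d → ℝ), ?_, ?_, ?_⟩
  · exact hM.mulVec_eigenvectorBasis i0
  · have h1 : (inner ℝ (hM.eigenvectorBasis i0) (hM.eigenvectorBasis i0) : ℝ) = 1 := by
      rw [real_inner_self_eq_norm_sq, hM.eigenvectorBasis.orthonormal.1 i0]
      norm_num
    rw [← inner_eq_dot] at *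
    exact h1
  · exact rayleigh_bound hM _ hi0

/-- Monotonicity of square root: from `A² ⪯ c²B²` conclude `A ⪯ cB` (quadratic forms). -/
lemma sqrt_mono {A B : Matrix (Fin d) (Fin d) ℝ} (hA : Aᵀ = A) (hB : Bᵀ = B)
    (hApos : ∀ v : Fin d → ℝ, v ≠ 0 → 0 < v ⬝ᵥ A *ᵥ v)
    (hBpos : ∀ v : Fin d → ℝ, 0 ≤ v ⬝ᵥ B *ᵥ v) (c : ℝ) (hc : 0 ≤ c)
    (h : ∀ z : Fin d → ℝ, (A *ᵥ z) ⬝ᵥ (A *ᵥ z) ≤ c^2 * ((B *ᵥ z) ⬝ᵥ (B *ᵥ z))) :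
    ∀ z : Fin d → ℝ, z ⬝ᵥ A *ᵥ z ≤ c * (z ⬝ᵥ B *ᵥ z) := by
  classical
  set D : Matrix (Fin d) (Fin d) ℝ := c • B - A with hD
  have hDt : Dᵀ = D := by
    rw [hD, Matrix.transpose_sub, Matrix.transpose_smul, hA, hB]
  have hDh : D.IsHermitian := herm_of_transpose hDt
  have heig : ∀ i, 0 ≤ hDh.eigenvalues i := by
    intro i
    set w : Fin d → ℝ := (hDh.eigenvectorBasis i : Fin d → ℝ) with hw
    have hDw : D *ᵥ w = hDh.eigenvalues i • w := hDh.mulVec_eigenvectorBasis i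
    have hwne : w ≠ 0 := by
      intro h0
      have := hDh.eigenvectorBasis.orthonormal.ne_zero i
      apply this
      ext j
      exact congrFun h0 j
    -- key identity
    have key : c^2 * ((B *ᵥ w) ⬝ᵥ (B *ᵥ w)) - (A *ᵥ w) ⬝ᵥ (A *ᵥ w)
        = hDh.eigenvalues i * (w ⬝ᵥ (c • B) *ᵥ w + w ⬝ᵥ A *ᵥ w) := by
      have e1 : w ⬝ᵥ ((c • B) *ᵥ (D *ᵥ w)) + w ⬝ᵥ (A *ᵥ (D *ᵥ w))
          = hDh.eigenvalues i * (w ⬝ᵥ (c • B) *ᵥ w + w ⬝ᵥ A *ᵥ w) := by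
        rw [hDw, Matrix.mulVec_smul, Matrix.mulVec_smul, dotProduct_smul, dotProduct_smul]
        simp only [smul_eq_mul]
        ring
      have e2 : w ⬝ᵥ ((c • B) *ᵥ (D *ᵥ w)) + w ⬝ᵥ (A *ᵥ (D *ᵥ w))
          = c^2 * ((B *ᵥ w) ⬝ᵥ (B *ᵥ w)) - (A *ᵥ w) ⬝ᵥ (A *ᵥ w) := by
        have hDmv : D *ᵥ w = c • (B *ᵥ w) - A *ᵥ w := by
          rw [hD, Matrix.sub_mulVec, Matrix.smul_mulVec]
        rw [hDmv]
        have hBs : (c • B) *ᵥ (c • (B *ᵥ w) - A *ᵥ w)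
            = c • (B *ᵥ (c • (B *ᵥ w) - A *ᵥ w)) := Matrix.smul_mulVec c B _
        rw [hBs]
        rw [Matrix.mulVec_sub, Matrix.mulVec_sub, Matrix.mulVec_smul, Matrix.mulVec_smul]
        rw [dotProduct_smul]
        rw [dotProduct_sub, dotProduct_sub, dotProduct_smul, dotProduct_smul]
        have c1 : w ⬝ᵥ (B *ᵥ (B *ᵥ w)) = (B *ᵥ w) ⬝ᵥ (B *ᵥ w) := by
          rw [dot_sym hB]
        have c2 : w ⬝ᵥ (A *ᵥ (A *ᵥ w)) = (A *ᵥ w) ⬝ᵥ (A *ᵥ w) := by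
          rw [dot_sym hA]
        have c3 : w ⬝ᵥ (B *ᵥ (A *ᵥ w)) = (B *ᵥ w) ⬝ᵥ (A *ᵥ w) := by
          rw [dot_sym hB]
        have c4 : w ⬝ᵥ (A *ᵥ (B *ᵥ w)) = (A *ᵥ w) ⬝ᵥ (B *ᵥ w) := by
          rw [dot_sym hA]
        rw [c1, c2, c3, c4, dotProduct_comm (B *ᵥ w) (A *ᵥ w)]
        simp only [smul_eq_mul]
        ring
      rw [← e1, e2]
    have hpos : 0 < w ⬝ᵥ (c • B) *ᵥ w + w ⬝ᵥ A *ᵥ w := by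
      have h1 : 0 ≤ w ⬝ᵥ (c • B) *ᵥ w := by
        rw [Matrix.smul_mulVec, dotProduct_smul]
        exact mul_nonneg hc (hBpos w)
      linarith [hApos w hwne]
    have hnum : 0 ≤ hDh.eigenvalues i * (w ⬝ᵥ (c • B) *ᵥ w + w ⬝ᵥ A *ᵥ w) := by
      rw [← key]
      linarith [h w]
    nlinarith [hnum, hpos]
  have hpsd : D.PosSemidef := hDh.posSemidef_iff_eigenvalues_nonneg.mpr heig
  intro z
  have := hpsd.dotProduct_mulVec_nonneg z
  have hstar : star z = z := by
    ext j; exact star_trivial _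
  rw [hstar, hD, Matrix.sub_mulVec, dotProduct_sub, Matrix.smul_mulVec,
    dotProduct_smul] at this
  have : 0 ≤ c * (z ⬝ᵥ B *ᵥ z) - z ⬝ᵥ A *ᵥ z := by
    simpa [smul_eq_mul] using this
  linarith

/-- Operator-norm bound transfers to the transpose. -/
lemma transpose_bound {M : Matrix (Fin d) (Fin d) ℝ} (c : ℝ) (hc : 0 ≤ c)
    (h : ∀ z : Fin d → ℝ, (M *ᵥ z) ⬝ᵥ (M *ᵥ z) ≤ c * (z ⬝ᵥ z)) :
    ∀ z : Fin d → ℝ, (Mᵀ *ᵥ z) ⬝ᵥ (Mᵀ *ᵥ z) ≤ c * (z ⬝ᵥ z) := by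
  intro z
  have h1 : (Mᵀ *ᵥ z) ⬝ᵥ (Mᵀ *ᵥ z) = z ⬝ᵥ (M *ᵥ (Mᵀ *ᵥ z)) := by
    rw [Matrix.dotProduct_mulVec, ← Matrix.mulVec_transpose, Matrix.transpose_transpose,
      dotProduct_comm]
  have h2 : ((Mᵀ *ᵥ z) ⬝ᵥ (Mᵀ *ᵥ z))^2 ≤ (z ⬝ᵥ z) * ((M *ᵥ (Mᵀ *ᵥ z)) ⬝ᵥ (M *ᵥ (Mᵀ *ᵥ z))) := by
    rw [h1]; exact dot_sq_le z _
  have h3 := h (Mᵀ *ᵥ z)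
  have hna : 0 ≤ (Mᵀ *ᵥ z) ⬝ᵥ (Mᵀ *ᵥ z) := dot_self_nonneg' _
  have hnz : 0 ≤ z ⬝ᵥ z := dot_self_nonneg' z
  rcases eq_or_lt_of_le hna with h0 | h0
  · rw [← h0]
    exact mul_nonneg hc hnz
  · nlinarith

end spectral

section pd
variable {d : ℕ} {U : Matrix (Fin d) (Fin d) ℝ}

lemma dot_self_pos {v : Fin d → ℝ} (hv : v ≠ 0) : 0 < v ⬝ᵥ v := by
  obtain ⟨i, hi⟩ := Function.ne_iff.mp hv
  apply Finset.sum_pos' (fun j _ => mul_self_nonneg _)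
  exact ⟨i, Finset.mem_univ i, mul_self_pos.2 (by simpa using hi)⟩

lemma enorm'_pos {v : Fin d → ℝ} (hv : v ≠ 0) : 0 < enorm' v := by
  rw [enorm']
  apply Real.sqrt_pos.2
  have := dot_self_pos hv
  simpa [dotProduct, pow_two] using this

lemma star_eq_self (v : Fin d → ℝ) : star v = v := by
  ext j; exact star_trivial _

lemma pd_quad_pos (hU : U.PosDef) {v : Fin d → ℝ} (hv : v ≠ 0) : 0 < v ⬝ᵥ U *ᵥ v := by
  have := hU.dotProduct_mulVec_pos hv
  rwa [star_eq_self] at this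

lemma pd_quad_nonneg (hU : U.PosDef) (v : Fin d → ℝ) : 0 ≤ v ⬝ᵥ U *ᵥ v := by
  rcases eq_or_ne v 0 with rfl | hv
  · simp
  · exact le_of_lt (pd_quad_pos hU hv)

lemma pd_mulVec_ne (hU : U.PosDef) {v : Fin d → ℝ} (hv : v ≠ 0) : U *ᵥ v ≠ 0 := by
  intro h0
  have := pd_quad_pos hU hv
  rw [h0] at this
  simp at this

lemma pd_detUnit (hU : U.PosDef) : IsUnit U.det :=
  isUnit_iff_ne_zero.2 (ne_of_gt hU.det_pos)

lemma pd_cancel1 (hU : U.PosDef) (v : Fin d → ℝ) : U *ᵥ (U⁻¹ *ᵥ v) = v := by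
  rw [Matrix.mulVec_mulVec, Matrix.mul_nonsing_inv _ (pd_detUnit hU), Matrix.one_mulVec]

lemma pd_cancel2 (hU : U.PosDef) (v : Fin d → ℝ) : U⁻¹ *ᵥ (U *ᵥ v) = v := by
  rw [Matrix.mulVec_mulVec, Matrix.nonsing_inv_mul _ (pd_detUnit hU), Matrix.one_mulVec]

lemma pd_tEq (hU : U.PosDef) : Uᵀ = U := transpose_of_herm hU.1

lemma pd_invT (hU : U.PosDef) : (U⁻¹)ᵀ = U⁻¹ := by
  rw [Matrix.transpose_nonsing_inv, pd_tEq hU]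

lemma pd_inv_quad_pos (hU : U.PosDef) {v : Fin d → ℝ} (hv : v ≠ 0) :
    0 < v ⬝ᵥ U⁻¹ *ᵥ v := by
  have hw : U⁻¹ *ᵥ v ≠ 0 := by
    intro h0
    apply hv
    rw [← pd_cancel1 hU v, h0, Matrix.mulVec_zero]
  have h1 : v ⬝ᵥ U⁻¹ *ᵥ v = (U⁻¹ *ᵥ v) ⬝ᵥ (U *ᵥ (U⁻¹ *ᵥ v)) := by
    rw [pd_cancel1 hU, dotProduct_comm]
  rw [h1]
  exact pd_quad_pos hU hw

lemma pd_inv_quad_nonneg (hU : U.PosDef) (v : Fin d → ℝ) : 0 ≤ v ⬝ᵥ U⁻¹ *ᵥ v := by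
  rcases eq_or_ne v 0 with rfl | hv
  · simp
  · exact le_of_lt (pd_inv_quad_pos hU hv)

lemma pd_enorm_mulVec_pos (hU : U.PosDef) {v : Fin d → ℝ} (hv : v ≠ 0) :
    0 < enorm' (U *ᵥ v) := enorm'_pos (pd_mulVec_ne hU hv)

end pd

section meas
variable {d : ℕ}

noncomputable def fro2 (M : Matrix (Fin d) (Fin d) ℝ) : ℝ := ∑ i, ∑ j, (M i j)^2

lemma fro2_nonneg (M : Matrix (Fin d) (Fin d) ℝ) : 0 ≤ fro2 M :=
  Finset.sum_nonneg fun i _ => Finset.sum_nonneg fun j _ => sq_nonneg _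

lemma n2_mulVec_le (M : Matrix (Fin d) (Fin d) ℝ) (y : Fin d → ℝ) :
    (M *ᵥ y) ⬝ᵥ (M *ᵥ y) ≤ fro2 M * (y ⬝ᵥ y) := by
  have h : ∀ i, (M *ᵥ y) i * (M *ᵥ y) i ≤ (∑ j, (M i j)^2) * (y ⬝ᵥ y) := by
    intro i
    have h1 := dot_sq_le (fun j => M i j) y
    have h2 : (M *ᵥ y) i = (fun j => M i j) ⬝ᵥ y := rfl
    rw [h2]
    calc ((fun j => M i j) ⬝ᵥ y) * ((fun j => M i j) ⬝ᵥ y)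
        = ((fun j => M i j) ⬝ᵥ y)^2 := (sq _).symm
      _ ≤ ((fun j => M i j) ⬝ᵥ (fun j => M i j)) * (y ⬝ᵥ y) := h1
      _ = (∑ j, (M i j)^2) * (y ⬝ᵥ y) := by simp [dotProduct, pow_two]
  calc (M *ᵥ y) ⬝ᵥ (M *ᵥ y) = ∑ i, (M *ᵥ y) i * (M *ᵥ y) i := rfl
    _ ≤ ∑ i, (∑ j, (M i j)^2) * (y ⬝ᵥ y) := Finset.sum_le_sum (fun i _ => h i)
    _ = fro2 M * (y ⬝ᵥ y) := by rw [fro2, Finset.sum_mul]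

lemma enorm'_eq_sqrt_dot (v : Fin d → ℝ) : enorm' v = Real.sqrt (v ⬝ᵥ v) := by
  rw [enorm']
  congr 1
  simp [dotProduct, pow_two]

lemma enorm'_mulVec_le (M : Matrix (Fin d) (Fin d) ℝ) (y : Fin d → ℝ) :
    enorm' (M *ᵥ y) ≤ Real.sqrt (fro2 M) * enorm' y := by
  rw [enorm'_eq_sqrt_dot, enorm'_eq_sqrt_dot, ← Real.sqrt_mul (fro2_nonneg M)]
  exact Real.sqrt_le_sqrt (n2_mulVec_le M y)

lemma abs_dot_le (v w : Fin d → ℝ) : |v ⬝ᵥ w| ≤ enorm' v * enorm' w := by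
  apply sq_le_imp_le (abs_nonneg _) (mul_nonneg (enorm'_nonneg v) (enorm'_nonneg w))
  rw [sq_abs, mul_pow, enorm'_sq, enorm'_sq]
  exact dot_sq_le v w

lemma abs_apply_le_enorm' (v : Fin d → ℝ) (i : Fin d) : |v i| ≤ enorm' v := by
  apply sq_le_imp_le (abs_nonneg _) (enorm'_nonneg v)
  rw [sq_abs, enorm'_sq]
  calc (v i)^2 = v i * v i := sq (v i)
    _ ≤ ∑ j, v j * v j := Finset.single_le_sum (fun j _ => mul_self_nonneg (v j)) (Finset.mem_univ i)
    _ = v ⬝ᵥ v := rfl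

lemma meas_mulVec_apply (M : Matrix (Fin d) (Fin d) ℝ) (i : Fin d) :
    Measurable fun y : Fin d → ℝ => (M *ᵥ y) i := by
  simp only [Matrix.mulVec, dotProduct]
  exact Finset.measurable_sum _ (fun j _ => by fun_prop)

lemma meas_dot (z : Fin d → ℝ) : Measurable fun y : Fin d → ℝ => y ⬝ᵥ z :=
  Finset.measurable_sum _ fun j _ => by fun_prop

lemma meas_enorm'_mulVec (M : Matrix (Fin d) (Fin d) ℝ) :
    Measurable fun y : Fin d → ℝ => enorm' (M *ᵥ y) := by
  have : Measurable fun y : Fin d → ℝ => ∑ i, ((M *ᵥ y) i)^2 :=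
    Finset.measurable_sum _ fun i _ => (meas_mulVec_apply M i).pow_const 2
  exact Real.continuous_sqrt.measurable.comp this

lemma integrable_of_bound (p : Measure (Fin d → ℝ)) [IsProbabilityMeasure p]
    {f : (Fin d → ℝ) → ℝ} (hm : Measurable f) {R C : ℝ}
    (hbdd : ∀ᵐ y ∂p, enorm' y ≤ R) (hC : ∀ y, enorm' y ≤ R → |f y| ≤ C) :
    Integrable f p :=
  (integrable_const C).mono' hm.aestronglyMeasurable
    (hbdd.mono fun y hy => by rw [Real.norm_eq_abs]; exact hC y hy)

end meas

section kernels
variable {d : ℕ} (p : Measure (Fin d → ℝ)) [IsProbabilityMeasure p]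

lemma quad_smul_vecMulVec (c : ℝ) (a u : Fin d → ℝ) :
    u ⬝ᵥ (c • vecMulVec a a) *ᵥ u = c * (a ⬝ᵥ u)^2 := by
  rw [Matrix.smul_mulVec, dotProduct_smul]
  have h1 : vecMulVec a a *ᵥ u = (a ⬝ᵥ u) • a := by
    ext i
    simp [Matrix.vecMulVec_apply, Matrix.mulVec, dotProduct, Finset.mul_sum, mul_assoc,
      mul_comm, mul_left_comm]
  rw [h1, dotProduct_smul, dotProduct_comm u a]
  try simp only [smul_eq_mul, pow_two]
  try ring

lemma meas_singleton_zero : MeasurableSet {y : Fin d → ℝ | y = 0} := by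
  simpa [Set.setOf_eq_eq_singleton] using (MeasurableSet.singleton (0 : Fin d → ℝ))

lemma integrable_kLDP {R : ℝ} (hbdd : ∀ᵐ y ∂p, enorm' y ≤ R) (hR : 0 ≤ R)
    {U : Matrix (Fin d) (Fin d) ℝ} (hU : U.PosDef) (z : Fin d → ℝ) :
    Integrable (fun y => if y = 0 then 0 else (enorm' (U *ᵥ y))⁻¹ * (y ⬝ᵥ z)^2) p := by
  apply integrable_of_bound p ?_ hbdd
    (C := fro2 U⁻¹ * (Real.sqrt (fro2 U) * R) * (z ⬝ᵥ z)) ?_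
  · exact Measurable.ite meas_singleton_zero measurable_const
      (((meas_enorm'_mulVec U).inv).mul ((meas_dot z).pow_const 2))
  · intro y hy
    have hCnn : 0 ≤ fro2 U⁻¹ * (Real.sqrt (fro2 U) * R) * (z ⬝ᵥ z) := by
      have := fro2_nonneg (U⁻¹ : Matrix (Fin d) (Fin d) ℝ)
      have := Real.sqrt_nonneg (fro2 U)
      have := dot_self_nonneg' z
      positivity
    rcases eq_or_ne y 0 with rfl | hy0
    · simpa using hCnn
    · simp only [if_neg hy0]
      set e := enorm' (U *ᵥ y) with he
      have hepos : 0 < e := pd_enorm_mulVec_pos hU hy0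
      have h1 : |e⁻¹ * (y ⬝ᵥ z)^2| = e⁻¹ * (y ⬝ᵥ z)^2 := by
        rw [abs_of_nonneg]
        positivity
      rw [h1]
      have hyy : y ⬝ᵥ y ≤ fro2 U⁻¹ * e^2 := by
        have h2 : y ⬝ᵥ y = (U⁻¹ *ᵥ (U *ᵥ y)) ⬝ᵥ (U⁻¹ *ᵥ (U *ᵥ y)) := by
          rw [pd_cancel2 hU]
        rw [h2, he, enorm'_sq]
        exact n2_mulVec_le U⁻¹ (U *ᵥ y)
      have h3 : (y ⬝ᵥ z)^2 ≤ (fro2 U⁻¹ * e^2) * (z ⬝ᵥ z) :=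
        le_trans (dot_sq_le y z) (mul_le_mul_of_nonneg_right hyy (dot_self_nonneg' z))
      have h4 : e⁻¹ * (y ⬝ᵥ z)^2 ≤ e⁻¹ * ((fro2 U⁻¹ * e^2) * (z ⬝ᵥ z)) :=
        mul_le_mul_of_nonneg_left h3 (by positivity)
      have h5 : e⁻¹ * ((fro2 U⁻¹ * e^2) * (z ⬝ᵥ z)) = fro2 U⁻¹ * e * (z ⬝ᵥ z) := by
        field_simp
      have h6 : e ≤ Real.sqrt (fro2 U) * R := by
        refine le_trans (enorm'_mulVec_le U y) ?_
        exact mul_le_mul_of_nonneg_left hy (Real.sqrt_nonneg _)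
      calc e⁻¹ * (y ⬝ᵥ z)^2 ≤ fro2 U⁻¹ * e * (z ⬝ᵥ z) := by rw [← h5]; exact h4
        _ ≤ fro2 U⁻¹ * (Real.sqrt (fro2 U) * R) * (z ⬝ᵥ z) := by
            apply mul_le_mul_of_nonneg_right _ (dot_self_nonneg' z)
            exact mul_le_mul_of_nonneg_left h6 (fro2_nonneg _)

lemma one_add_pos {γ e : ℝ} (hγ : 0 ≤ γ) (he : 0 ≤ e) : 0 < 1 + γ * e := by nlinarith

lemma integrable_kJDP {R : ℝ} (hbdd : ∀ᵐ y ∂p, enorm' y ≤ R) (hR : 0 ≤ R)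
    {γ : ℝ} (hγ : 0 ≤ γ) (W : Matrix (Fin d) (Fin d) ℝ) (z : Fin d → ℝ) :
    Integrable (fun y => (1 + γ * enorm' (W *ᵥ y))⁻¹ * (y ⬝ᵥ z)^2) p := by
  apply integrable_of_bound p ?_ hbdd (C := R^2 * (z ⬝ᵥ z)) ?_
  · exact ((measurable_const.add ((meas_enorm'_mulVec W).const_mul γ)).inv).mul
      ((meas_dot z).pow_const 2)
  · intro y hy
    have he : 0 ≤ enorm' (W *ᵥ y) := enorm'_nonneg _
    have hpos := one_add_pos hγ he
    have h1 : |(1 + γ * enorm' (W *ᵥ y))⁻¹ * (y ⬝ᵥ z)^2|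
        = (1 + γ * enorm' (W *ᵥ y))⁻¹ * (y ⬝ᵥ z)^2 := by
      rw [abs_of_nonneg]
      positivity
    rw [h1]
    have h2 : (1 + γ * enorm' (W *ᵥ y))⁻¹ ≤ 1 := by
      rw [inv_le_one_iff₀]
      right
      nlinarith
    have h3 : (y ⬝ᵥ z)^2 ≤ R^2 * (z ⬝ᵥ z) := by
      refine le_trans (dot_sq_le y z) ?_
      apply mul_le_mul_of_nonneg_right _ (dot_self_nonneg' z)
      rw [← enorm'_sq]
      exact pow_le_pow_left₀ (enorm'_nonneg y) hy 2
    calc (1 + γ * enorm' (W *ᵥ y))⁻¹ * (y ⬝ᵥ z)^2 ≤ 1 * (y ⬝ᵥ z)^2 :=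
          mul_le_mul_of_nonneg_right h2 (sq_nonneg _)
      _ = (y ⬝ᵥ z)^2 := one_mul _
      _ ≤ R^2 * (z ⬝ᵥ z) := h3

end kernels

section mexp
variable {d : ℕ} (p : Measure (Fin d → ℝ)) [IsProbabilityMeasure p]

lemma quad_dot_expand (M : Matrix (Fin d) (Fin d) ℝ) (u : Fin d → ℝ) :
    u ⬝ᵥ M *ᵥ u = ∑ i, ∑ j, u i * M i j * u j := by
  simp only [dotProduct, Matrix.mulVec, Finset.mul_sum]
  apply Finset.sum_congr rfl
  intro i _
  apply Finset.sum_congr rfl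
  intro j _
  ring

lemma quad_mExp (f : (Fin d → ℝ) → Matrix (Fin d) (Fin d) ℝ)
    (hf : ∀ i j, Integrable (fun y => f y i j) p) (u : Fin d → ℝ) :
    u ⬝ᵥ (mExp p f) *ᵥ u = ∫ y, u ⬝ᵥ (f y) *ᵥ u ∂p := by
  rw [quad_dot_expand]
  have h1 : ∀ i j, u i * (mExp p f) i j * u j = ∫ y, u i * f y i j * u j ∂p := by
    intro i j
    rw [show (mExp p f) i j = ∫ y, f y i j ∂p from rfl]
    rw [← integral_const_mul, ← integral_mul_const]
  have h2 : ∀ i, ∑ j, u i * (mExp p f) i j * u j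
      = ∫ y, ∑ j, u i * f y i j * u j ∂p := by
    intro i
    calc ∑ j, u i * (mExp p f) i j * u j = ∑ j, ∫ y, u i * f y i j * u j ∂p :=
          Finset.sum_congr rfl fun j _ => h1 i j
      _ = ∫ y, ∑ j, u i * f y i j * u j ∂p :=
          (integral_finset_sum _ fun j _ => ((hf i j).const_mul (u i)).mul_const (u j)).symm
  rw [show ∑ i, ∑ j, u i * (mExp p f) i j * u j
      = ∑ i, ∫ y, ∑ j, u i * f y i j * u j ∂p from Finset.sum_congr rfl fun i _ => h2 i]
  rw [show (∑ i, ∫ y, ∑ j, u i * f y i j * u j ∂p)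
      = ∫ y, ∑ i, ∑ j, u i * f y i j * u j ∂p from
    (integral_finset_sum _ fun i _ => integrable_finset_sum _
      fun j _ => ((hf i j).const_mul (u i)).mul_const (u j)).symm]
  apply integral_congr_ae
  filter_upwards with y
  rw [quad_dot_expand]

lemma integrable_LDP_entry {R : ℝ} (hbdd : ∀ᵐ y ∂p, enorm' y ≤ R) (hR : 0 ≤ R)
    {U : Matrix (Fin d) (Fin d) ℝ} (hU : U.PosDef) (i j : Fin d) :
    Integrable (fun y => (if y = 0 then (0 : Matrix (Fin d) (Fin d) ℝ)
      else (enorm' (U *ᵥ y))⁻¹ • vecMulVec (U *ᵥ y) (U *ᵥ y)) i j) p := by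
  have heq : (fun y => (if y = 0 then (0 : Matrix (Fin d) (Fin d) ℝ)
      else (enorm' (U *ᵥ y))⁻¹ • vecMulVec (U *ᵥ y) (U *ᵥ y)) i j)
      = fun y => if y = 0 then 0 else (enorm' (U *ᵥ y))⁻¹ * ((U *ᵥ y) i * (U *ᵥ y) j) := by
    funext y
    rcases eq_or_ne y 0 with rfl | hy0
    · simp
    · simp [if_neg hy0, Matrix.smul_apply, Matrix.vecMulVec_apply, smul_eq_mul]
  rw [heq]
  apply integrable_of_bound p ?_ hbdd (C := Real.sqrt (fro2 U) * R) ?_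
  · exact Measurable.ite meas_singleton_zero measurable_const
      (((meas_enorm'_mulVec U).inv).mul ((meas_mulVec_apply U i).mul (meas_mulVec_apply U j)))
  · intro y hy
    have hCnn : 0 ≤ Real.sqrt (fro2 U) * R := mul_nonneg (Real.sqrt_nonneg _) hR
    rcases eq_or_ne y 0 with rfl | hy0
    · simpa using hCnn
    · simp only [if_neg hy0]
      set e := enorm' (U *ᵥ y) with he
      have hepos : 0 < e := pd_enorm_mulVec_pos hU hy0
      have h6 : e ≤ Real.sqrt (fro2 U) * R :=
        le_trans (enorm'_mulVec_le U y) (mul_le_mul_of_nonneg_left hy (Real.sqrt_nonneg _))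
      have h2 : |(U *ᵥ y) i * (U *ᵥ y) j| ≤ e * e := by
        rw [abs_mul]
        exact mul_le_mul (abs_apply_le_enorm' _ i) (abs_apply_le_enorm' _ j)
          (abs_nonneg _) (le_of_lt hepos)
      calc |e⁻¹ * ((U *ᵥ y) i * (U *ᵥ y) j)| = e⁻¹ * |(U *ᵥ y) i * (U *ᵥ y) j| := by
            rw [abs_mul, abs_of_nonneg (by positivity : (0:ℝ) ≤ e⁻¹)]
        _ ≤ e⁻¹ * (e * e) := mul_le_mul_of_nonneg_left h2 (by positivity)
        _ = e := by field_simp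
        _ ≤ Real.sqrt (fro2 U) * R := h6

lemma integrable_JDP_entry {R : ℝ} (hbdd : ∀ᵐ y ∂p, enorm' y ≤ R) (hR : 0 ≤ R)
    {γ : ℝ} (hγ : 0 ≤ γ) (W : Matrix (Fin d) (Fin d) ℝ) (i j : Fin d) :
    Integrable (fun y => ((1 + γ * enorm' (W *ᵥ y))⁻¹
      • vecMulVec (W *ᵥ y) (W *ᵥ y)) i j) p := by
  have heq : (fun y => ((1 + γ * enorm' (W *ᵥ y))⁻¹ • vecMulVec (W *ᵥ y) (W *ᵥ y)) i j)
      = fun y => (1 + γ * enorm' (W *ᵥ y))⁻¹ * ((W *ᵥ y) i * (W *ᵥ y) j) := by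
    funext y
    simp [Matrix.smul_apply, Matrix.vecMulVec_apply, smul_eq_mul]
  rw [heq]
  apply integrable_of_bound p ?_ hbdd (C := fro2 W * R^2) ?_
  · exact ((measurable_const.add ((meas_enorm'_mulVec W).const_mul γ)).inv).mul
      ((meas_mulVec_apply W i).mul (meas_mulVec_apply W j))
  · intro y hy
    set e := enorm' (W *ᵥ y) with he
    have hepos : 0 ≤ e := enorm'_nonneg _
    have hpos := one_add_pos hγ hepos
    have h2 : |(W *ᵥ y) i * (W *ᵥ y) j| ≤ e * e := by
      rw [abs_mul]
      exact mul_le_mul (abs_apply_le_enorm' _ i) (abs_apply_le_enorm' _ j)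
        (abs_nonneg _) hepos
    have hinv : (1 + γ * e)⁻¹ ≤ 1 := by
      rw [inv_le_one_iff₀]
      right
      nlinarith
    have h3 : e * e ≤ fro2 W * R^2 := by
      have h4 : e * e = (W *ᵥ y) ⬝ᵥ (W *ᵥ y) := by rw [← enorm'_sq, he, pow_two]
      rw [h4]
      refine le_trans (n2_mulVec_le W y) ?_
      apply mul_le_mul_of_nonneg_left _ (fro2_nonneg W)
      rw [← enorm'_sq]
      exact pow_le_pow_left₀ (enorm'_nonneg y) hy 2
    calc |(1 + γ * e)⁻¹ * ((W *ᵥ y) i * (W *ᵥ y) j)|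
        = (1 + γ * e)⁻¹ * |(W *ᵥ y) i * (W *ᵥ y) j| := by
          rw [abs_mul, abs_of_nonneg (by positivity : (0:ℝ) ≤ (1 + γ * e)⁻¹)]
      _ ≤ 1 * (e * e) := by
          apply mul_le_mul hinv h2 (abs_nonneg _) zero_le_one
      _ = e * e := one_mul _
      _ ≤ fro2 W * R^2 := h3

end mexp

section Eeqs
variable {d : ℕ} (p : Measure (Fin d → ℝ)) [IsProbabilityMeasure p]

lemma E_LDP {R : ℝ} (hbdd : ∀ᵐ y ∂p, enorm' y ≤ R) (hR : 0 ≤ R)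
    {μc : ℝ} {U : Matrix (Fin d) (Fin d) ℝ} (hU : U.PosDef)
    (hfix : FLDP p μc U = 1) (z : Fin d → ℝ) :
    (∫ y, (if y = 0 then 0 else (enorm' (U *ᵥ y))⁻¹ * (y ⬝ᵥ z)^2) ∂p)
      + μc * (z ⬝ᵥ U⁻¹ *ᵥ z) = (U⁻¹ *ᵥ z) ⬝ᵥ (U⁻¹ *ᵥ z) := by
  set u : Fin d → ℝ := U⁻¹ *ᵥ z with hu
  have hq := congrArg (fun M => u ⬝ᵥ M *ᵥ u) hfix
  simp only [FLDP] at hq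
  rw [Matrix.add_mulVec, dotProduct_add, Matrix.smul_mulVec, dotProduct_smul,
    Matrix.one_mulVec] at hq
  rw [quad_mExp p _ (fun i j => integrable_LDP_entry p hbdd hR hU i j) u] at hq
  have hconv : (fun y => u ⬝ᵥ (if y = 0 then (0 : Matrix (Fin d) (Fin d) ℝ)
      else (enorm' (U *ᵥ y))⁻¹ • vecMulVec (U *ᵥ y) (U *ᵥ y)) *ᵥ u)
      = fun y => if y = 0 then 0 else (enorm' (U *ᵥ y))⁻¹ * (y ⬝ᵥ z)^2 := by
    funext y
    rcases eq_or_ne y 0 with rfl | hy0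
    · simp
    · rw [if_neg hy0, if_neg hy0, quad_smul_vecMulVec]
      congr 2
      rw [dot_sym (pd_invT hU) (U *ᵥ y) z, pd_cancel2 hU]
  rw [hconv] at hq
  have hWu : U *ᵥ u = z := pd_cancel1 hU z
  have hlam : u ⬝ᵥ U *ᵥ u = z ⬝ᵥ U⁻¹ *ᵥ z := by
    rw [hWu, hu, dotProduct_comm]
  rw [hlam] at hq
  have huu : u ⬝ᵥ u = (U⁻¹ *ᵥ z) ⬝ᵥ (U⁻¹ *ᵥ z) := rfl
  rw [huu] at hq
  simpa [smul_eq_mul] using hq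

lemma E_JDP {R : ℝ} (hbdd : ∀ᵐ y ∂p, enorm' y ≤ R) (hR : 0 ≤ R)
    {γ lam : ℝ} (hγ : 0 ≤ γ) {W : Matrix (Fin d) (Fin d) ℝ} (hW : W.PosDef)
    (hfix : FJDP p γ lam W = 1) (z : Fin d → ℝ) :
    (∫ y, (1 + γ * enorm' (W *ᵥ y))⁻¹ * (y ⬝ᵥ z)^2 ∂p)
      + lam * (z ⬝ᵥ W⁻¹ *ᵥ z) = (W⁻¹ *ᵥ z) ⬝ᵥ (W⁻¹ *ᵥ z) := by
  set u : Fin d → ℝ := W⁻¹ *ᵥ z with hu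
  have hq := congrArg (fun M => u ⬝ᵥ M *ᵥ u) hfix
  simp only [FJDP] at hq
  rw [Matrix.add_mulVec, dotProduct_add, Matrix.smul_mulVec, dotProduct_smul,
    Matrix.one_mulVec] at hq
  rw [quad_mExp p _ (fun i j => integrable_JDP_entry p hbdd hR hγ W i j) u] at hq
  have hconv : (fun y => u ⬝ᵥ ((1 + γ * enorm' (W *ᵥ y))⁻¹
      • vecMulVec (W *ᵥ y) (W *ᵥ y)) *ᵥ u)
      = fun y => (1 + γ * enorm' (W *ᵥ y))⁻¹ * (y ⬝ᵥ z)^2 := by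
    funext y
    rw [quad_smul_vecMulVec]
    congr 2
    rw [dot_sym (pd_invT hW) (W *ᵥ y) z, pd_cancel2 hW]
  rw [hconv] at hq
  have hWu : W *ᵥ u = z := pd_cancel1 hW z
  have hlam : u ⬝ᵥ W *ᵥ u = z ⬝ᵥ W⁻¹ *ᵥ z := by
    rw [hWu, hu, dotProduct_comm]
  rw [hlam] at hq
  simpa [smul_eq_mul] using hq

end Eeqs

section main
variable {d : ℕ}

lemma quad_tmul (A : Matrix (Fin d) (Fin d) ℝ) (y : Fin d → ℝ) :
    y ⬝ᵥ (Aᵀ * A) *ᵥ y = (A *ᵥ y) ⬝ᵥ (A *ᵥ y) := by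
  rw [← Matrix.mulVec_mulVec, Matrix.dotProduct_mulVec, Matrix.vecMul_transpose]

lemma lower_key (p : Measure (Fin d → ℝ)) [IsProbabilityMeasure p] [Nonempty (Fin d)]
    {R : ℝ} (hbdd : ∀ᵐ y ∂p, enorm' y ≤ R) (hR : 0 ≤ R)
    {lam γ : ℝ} (hlam : 0 < lam) (hγ : 0 < γ)
    {U1 W : Matrix (Fin d) (Fin d) ℝ} (hU1 : U1.PosDef) (hW : W.PosDef)
    (hU1fix : FLDP p (γ * lam) U1 = 1) (hWfix : FJDP p γ lam W = 1) :
    ∀ x, γ^2 * ((U1 *ᵥ x) ⬝ᵥ (U1 *ᵥ x)) ≤ (W *ᵥ x) ⬝ᵥ (W *ᵥ x) := by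
  set A : Matrix (Fin d) (Fin d) ℝ := W⁻¹ * U1 with hA
  set M : Matrix (Fin d) (Fin d) ℝ := γ^2 • (Aᵀ * A) with hM
  have hMt : Mᵀ = M := by
    rw [hM, Matrix.transpose_smul, Matrix.transpose_mul, Matrix.transpose_transpose]
  have hMherm : M.IsHermitian := herm_of_transpose hMt
  obtain ⟨μ, w, hMw, hw1, hray⟩ := exists_top_eigen hMherm
  have hquad : ∀ y, y ⬝ᵥ M *ᵥ y
      = γ^2 * ((W⁻¹ *ᵥ (U1 *ᵥ y)) ⬝ᵥ (W⁻¹ *ᵥ (U1 *ᵥ y))) := by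
    intro y
    rw [hM, Matrix.smul_mulVec, dotProduct_smul, smul_eq_mul, quad_tmul, hA,
      ← Matrix.mulVec_mulVec]
  have hμnn : 0 ≤ μ := by
    have h1 : w ⬝ᵥ M *ᵥ w = μ := by
      rw [hMw, dotProduct_smul, smul_eq_mul, hw1, mul_one]
    have h2 := hquad w
    rw [h1] at h2
    rw [h2]
    have := dot_self_nonneg' (W⁻¹ *ᵥ (U1 *ᵥ w))
    positivity
  set σ : ℝ := Real.sqrt μ with hσ
  have hσ2 : σ^2 = μ := Real.sq_sqrt hμnn
  have hσnn : 0 ≤ σ := Real.sqrt_nonneg _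
  have hF1 : ∀ y, γ^2 * ((W⁻¹ *ᵥ (U1 *ᵥ y)) ⬝ᵥ (W⁻¹ *ᵥ (U1 *ᵥ y))) ≤ μ * (y ⬝ᵥ y) := by
    intro y
    rw [← hquad]
    exact hray y
  have hF4 : ∀ x, γ^2 * ((U1 *ᵥ x) ⬝ᵥ (U1 *ᵥ x)) ≤ μ * ((W *ᵥ x) ⬝ᵥ (W *ᵥ x)) := by
    have hb : ∀ z, (A *ᵥ z) ⬝ᵥ (A *ᵥ z) ≤ (μ/γ^2) * (z ⬝ᵥ z) := by
      intro z
      have h1 := hF1 z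
      have h2 : (A *ᵥ z) = W⁻¹ *ᵥ (U1 *ᵥ z) := by rw [hA, ← Matrix.mulVec_mulVec]
      rw [h2, div_mul_eq_mul_div, le_div_iff₀ (by positivity : (0:ℝ) < γ^2)]
      nlinarith [hF1 z]
    have hbt := transpose_bound (μ/γ^2) (by positivity) hb
    intro x
    have h3 : Aᵀ *ᵥ (W *ᵥ x) = U1 *ᵥ x := by
      rw [hA, Matrix.transpose_mul, pd_invT hW, pd_tEq hU1, ← Matrix.mulVec_mulVec,
        pd_cancel2 hW]
    have h4 := hbt (W *ᵥ x)
    rw [h3] at h4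
    have hγ2 : (0:ℝ) < γ^2 := by positivity
    rw [div_mul_eq_mul_div, le_div_iff₀ hγ2] at h4
    nlinarith [dot_self_nonneg' (U1 *ᵥ x)]
  have hμle1 : μ ≤ 1 := by
    have hF3 : ∀ x, (W⁻¹ *ᵥ x) ⬝ᵥ (W⁻¹ *ᵥ x)
        ≤ (σ/γ)^2 * ((U1⁻¹ *ᵥ x) ⬝ᵥ (U1⁻¹ *ᵥ x)) := by
      intro x
      have h1 := hF1 (U1⁻¹ *ᵥ x)
      rw [pd_cancel1 hU1 x] at h1
      rw [div_pow, hσ2, div_mul_eq_mul_div, le_div_iff₀ (by positivity : (0:ℝ) < γ^2)]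
      nlinarith
    have hsm : ∀ z, z ⬝ᵥ W⁻¹ *ᵥ z ≤ (σ/γ) * (z ⬝ᵥ U1⁻¹ *ᵥ z) :=
      sqrt_mono (pd_invT hW) (pd_invT hU1)
        (fun v hv => pd_inv_quad_pos hW hv) (fun v => pd_inv_quad_nonneg hU1 v)
        (σ/γ) (div_nonneg hσnn hγ.le) hF3
    set z : Fin d → ℝ := γ • (U1 *ᵥ w) with hz
    have hE1 := E_JDP p hbdd hR hγ.le hW hWfix z
    have hE2 := E_LDP p hbdd hR hU1 hU1fix z
    have hWiz : W⁻¹ *ᵥ z = γ • (W⁻¹ *ᵥ (U1 *ᵥ w)) := by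
      rw [hz, Matrix.mulVec_smul]
    have hnorm1 : (W⁻¹ *ᵥ z) ⬝ᵥ (W⁻¹ *ᵥ z) = μ := by
      rw [hWiz, smul_dotProduct, dotProduct_smul, smul_eq_mul, smul_eq_mul]
      have h1 : w ⬝ᵥ M *ᵥ w = μ := by
        rw [hMw, dotProduct_smul, smul_eq_mul, hw1, mul_one]
      have h2 := hquad w
      rw [h1] at h2
      rw [← mul_assoc, ← pow_two, ← h2]
    have hUiz : U1⁻¹ *ᵥ z = γ • w := by
      rw [hz, Matrix.mulVec_smul, pd_cancel2 hU1]
    have hnorm2 : (U1⁻¹ *ᵥ z) ⬝ᵥ (U1⁻¹ *ᵥ z) = γ^2 := by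
      rw [hUiz, smul_dotProduct, dotProduct_smul, smul_eq_mul, smul_eq_mul, hw1]
      ring
    -- pointwise comparison of kernels
    have hpw : ∀ y, (1 + γ * enorm' (W *ᵥ y))⁻¹ * (y ⬝ᵥ z)^2
        ≤ (σ/γ^2) * (if y = 0 then 0 else (enorm' (U1 *ᵥ y))⁻¹ * (y ⬝ᵥ z)^2) := by
      intro y
      rcases eq_or_ne y 0 with rfl | hy0
      · simp
      · rw [if_neg hy0]
        set eW := enorm' (W *ᵥ y) with heW
        set eU := enorm' (U1 *ᵥ y) with heU
        have heWnn : 0 ≤ eW := enorm'_nonneg _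
        have heUpos : 0 < eU := pd_enorm_mulVec_pos hU1 hy0
        have hposW : 0 < 1 + γ * eW := one_add_pos hγ.le heWnn
        have hkey : γ * eU ≤ σ * eW := by
          apply sq_le_imp_le (by positivity) (by positivity)
          have h5 := hF4 y
          rw [mul_pow, mul_pow, hσ2, heU, heW, enorm'_sq, enorm'_sq]
          exact h5
        have hkey2 : γ^2 * eU ≤ σ * (1 + γ * eW) := by nlinarith
        set q := (y ⬝ᵥ z)^2 with hq
        have hqnn : 0 ≤ q := sq_nonneg _
        have h8 : q / (1 + γ * eW) ≤ (σ * q) / (γ^2 * eU) := by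
          rw [div_le_div_iff₀ hposW (by positivity)]
          nlinarith
        calc (1 + γ * eW)⁻¹ * q = q / (1 + γ * eW) := by rw [inv_mul_eq_div]
          _ ≤ (σ * q) / (γ^2 * eU) := h8
          _ = (σ/γ^2) * (eU⁻¹ * q) := by
              field_simp
              try ring
    have hint1 := integrable_kJDP p hbdd hR hγ.le W z
    have hint2 := (integrable_kLDP p hbdd hR hU1 z).const_mul (σ/γ^2)
    have hmono := integral_mono hint1 hint2 hpw
    rw [integral_const_mul] at hmono
    -- combine
    have hItot : μ ≤ σ := by
      have hlamterm : lam * (z ⬝ᵥ W⁻¹ *ᵥ z) ≤ lam * ((σ/γ) * (z ⬝ᵥ U1⁻¹ *ᵥ z)) :=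
        mul_le_mul_of_nonneg_left (hsm z) hlam.le
      have hrw : (σ/γ^2) * (∫ y, (if y = 0 then 0
            else (enorm' (U1 *ᵥ y))⁻¹ * (y ⬝ᵥ z)^2) ∂p)
          + lam * ((σ/γ) * (z ⬝ᵥ U1⁻¹ *ᵥ z)) = σ := by
        have h9 : ∫ y, (if y = 0 then 0 else (enorm' (U1 *ᵥ y))⁻¹ * (y ⬝ᵥ z)^2) ∂p
            = γ^2 - (γ*lam) * (z ⬝ᵥ U1⁻¹ *ᵥ z) := by
          rw [← hnorm2]
          linarith [hE2]
        rw [h9]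
        field_simp
        ring
      rw [← hnorm1, ← hE1]
      rw [← hrw]
      exact add_le_add hmono hlamterm
    nlinarith
  intro x
  have := hF4 x
  nlinarith [dot_self_nonneg' (W *ᵥ x)]

end main

lemma scalar_small {eU μ q t : ℝ} (heU : 0 < eU) (hsm : eU < 1/2) (hq : 0 ≤ q)
    (hcs : q ≤ eU^2 * μ) (hμ : 0 ≤ μ) (ht : 0 ≤ t) : eU⁻¹ * q ≤ μ/2 + t := by
  have h6 : eU⁻¹ * q ≤ eU⁻¹ * (eU^2 * μ) := mul_le_mul_of_nonneg_left hcs (by positivity)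
  have h7 : eU⁻¹ * (eU^2 * μ) = eU * μ := by
    field_simp
    try ring
  nlinarith

lemma scalar_big {γ ρ eU eW q : ℝ} (hγ : 0 ≤ γ) (hρ : 0 ≤ ρ) (hbig : 1/2 ≤ eU)
    (heW : 0 ≤ eW) (hWU : eW ≤ ρ * eU) (hq : 0 ≤ q) {c : ℝ} (hc : 0 ≤ c) :
    eU⁻¹ * q ≤ c + (2 + γ*ρ) * ((1 + γ*eW)⁻¹ * q) := by
  have heUpos : 0 < eU := by linarith
  have hposW : 0 < 1 + γ*eW := by nlinarith
  have hcoef : 1 + γ * eW ≤ (2 + γ*ρ) * eU := by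
    nlinarith [mul_nonneg hγ (by linarith : (0:ℝ) ≤ ρ * eU - eW)]
  have h8 : q / eU ≤ ((2 + γ*ρ) * q) / (1 + γ * eW) := by
    rw [div_le_div_iff₀ heUpos hposW]
    nlinarith [mul_le_mul_of_nonneg_left hcoef hq]
  have h9 : eU⁻¹ * q = q / eU := by rw [inv_mul_eq_div]
  have h10 : (2 + γ*ρ) * ((1 + γ*eW)⁻¹ * q) = ((2 + γ*ρ) * q) / (1 + γ * eW) := by
    field_simp
  linarith

lemma scalar_combine {γ ρ a b : ℝ} (hγ : 0 ≤ γ) (hρ : 0 ≤ ρ) (ha : 0 ≤ a) (hb : 0 ≤ b)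
    (hab : a + b = 1) (htot : ρ^2 ≤ ρ^2/2 + (2 + γ*ρ)*a + (1 + γ)*ρ*b) :
    ρ^2 ≤ 16 * (1 + γ)^2 := by
  have hcc : (2 + γ*ρ)*a + (1 + γ)*ρ*b ≤ 2 + γ*ρ + (1 + γ)*ρ := by
    nlinarith [mul_nonneg (mul_nonneg (by linarith : (0:ℝ) ≤ 1 + γ) hρ) ha,
      mul_nonneg (by nlinarith : (0:ℝ) ≤ 2 + γ*ρ) hb,
      mul_nonneg hγ (mul_nonneg hρ hb), mul_nonneg hγ (mul_nonneg hρ ha)]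
  have h1 : ρ^2 ≤ 4 + (2 + 4*γ)*ρ := by nlinarith
  have h2 : ρ ≤ 4 + 4*γ := by nlinarith [mul_nonneg hγ hρ]
  nlinarith [mul_nonneg hγ hρ]

lemma upper_key (p : Measure (Fin d → ℝ)) [IsProbabilityMeasure p] [Nonempty (Fin d)]
    {R : ℝ} (hbdd : ∀ᵐ y ∂p, enorm' y ≤ R) (hR : 0 ≤ R)
    {lam γ : ℝ} (hlam : 0 < lam) (hγ : 0 ≤ γ)
    {U2 W : Matrix (Fin d) (Fin d) ℝ} (hU2 : U2.PosDef) (hW : W.PosDef)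
    (hU2fix : FLDP p ((1 + γ) * lam) U2 = 1) (hWfix : FJDP p γ lam W = 1) :
    ∀ x, (W *ᵥ x) ⬝ᵥ (W *ᵥ x) ≤ (16 * (1 + γ)^2) * ((U2 *ᵥ x) ⬝ᵥ (U2 *ᵥ x)) := by
  set A : Matrix (Fin d) (Fin d) ℝ := U2⁻¹ * W with hA
  set M : Matrix (Fin d) (Fin d) ℝ := Aᵀ * A with hM
  have hMt : Mᵀ = M := by
    rw [hM, Matrix.transpose_mul, Matrix.transpose_transpose]
  have hMherm : M.IsHermitian := herm_of_transpose hMt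
  obtain ⟨μ, w, hMw, hw1, hray⟩ := exists_top_eigen hMherm
  have hquad : ∀ y, y ⬝ᵥ M *ᵥ y
      = (U2⁻¹ *ᵥ (W *ᵥ y)) ⬝ᵥ (U2⁻¹ *ᵥ (W *ᵥ y)) := by
    intro y
    rw [hM, quad_tmul, hA, ← Matrix.mulVec_mulVec]
  have hwMw : w ⬝ᵥ M *ᵥ w = μ := by
    rw [hMw, dotProduct_smul, smul_eq_mul, hw1, mul_one]
  have hμnn : 0 ≤ μ := by
    rw [← hwMw, hquad w]
    exact dot_self_nonneg' _
  set ρ : ℝ := Real.sqrt μ with hρ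
  have hρ2 : ρ^2 = μ := Real.sq_sqrt hμnn
  have hρnn : 0 ≤ ρ := Real.sqrt_nonneg _
  have hG1 : ∀ y, (U2⁻¹ *ᵥ (W *ᵥ y)) ⬝ᵥ (U2⁻¹ *ᵥ (W *ᵥ y)) ≤ μ * (y ⬝ᵥ y) := by
    intro y
    rw [← hquad]
    exact hray y
  have hG4 : ∀ x, (W *ᵥ x) ⬝ᵥ (W *ᵥ x) ≤ μ * ((U2 *ᵥ x) ⬝ᵥ (U2 *ᵥ x)) := by
    have hb : ∀ z, (A *ᵥ z) ⬝ᵥ (A *ᵥ z) ≤ μ * (z ⬝ᵥ z) := by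
      intro z
      have h2 : (A *ᵥ z) = U2⁻¹ *ᵥ (W *ᵥ z) := by rw [hA, ← Matrix.mulVec_mulVec]
      rw [h2]
      exact hG1 z
    have hbt := transpose_bound μ hμnn hb
    intro x
    have h3 : Aᵀ *ᵥ (U2 *ᵥ x) = W *ᵥ x := by
      rw [hA, Matrix.transpose_mul, pd_invT hU2, pd_tEq hW, ← Matrix.mulVec_mulVec,
        pd_cancel2 hU2]
    have h4 := hbt (U2 *ᵥ x)
    rwa [h3] at h4
  have hμle : μ ≤ 16 * (1 + γ)^2 := by
    have hG3 : ∀ x, (U2⁻¹ *ᵥ x) ⬝ᵥ (U2⁻¹ *ᵥ x)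
        ≤ ρ^2 * ((W⁻¹ *ᵥ x) ⬝ᵥ (W⁻¹ *ᵥ x)) := by
      intro x
      have h1 := hG1 (W⁻¹ *ᵥ x)
      rw [pd_cancel1 hW x, hρ2] at *
      exact h1
    have hsm : ∀ z, z ⬝ᵥ U2⁻¹ *ᵥ z ≤ ρ * (z ⬝ᵥ W⁻¹ *ᵥ z) :=
      sqrt_mono (pd_invT hU2) (pd_invT hW)
        (fun v hv => pd_inv_quad_pos hU2 hv) (fun v => pd_inv_quad_nonneg hW v)
        ρ hρnn hG3
    set z : Fin d → ℝ := W *ᵥ w with hz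
    have hE1 := E_JDP p hbdd hR hγ hW hWfix z
    have hE2 := E_LDP p hbdd hR hU2 hU2fix z
    have hWiz : W⁻¹ *ᵥ z = w := pd_cancel2 hW w
    have hnormW : (W⁻¹ *ᵥ z) ⬝ᵥ (W⁻¹ *ᵥ z) = 1 := by rw [hWiz, hw1]
    have hnormU : (U2⁻¹ *ᵥ z) ⬝ᵥ (U2⁻¹ *ᵥ z) = μ := by
      rw [hz, ← hquad w, hwMw]
    have hJWnn : 0 ≤ ∫ y, (1 + γ * enorm' (W *ᵥ y))⁻¹ * (y ⬝ᵥ z)^2 ∂p := by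
      apply integral_nonneg
      intro y
      have := one_add_pos hγ (enorm'_nonneg (W *ᵥ y))
      positivity
    have hbWnn : 0 ≤ z ⬝ᵥ W⁻¹ *ᵥ z := pd_inv_quad_nonneg hW z
    -- pointwise comparison
    have hpw : ∀ y, (if y = 0 then 0 else (enorm' (U2 *ᵥ y))⁻¹ * (y ⬝ᵥ z)^2)
        ≤ μ/2 + (2 + γ*ρ) * ((1 + γ * enorm' (W *ᵥ y))⁻¹ * (y ⬝ᵥ z)^2) := by
      intro y
      have h2γρ : (0:ℝ) ≤ 2 + γ*ρ := by nlinarith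
      rcases eq_or_ne y 0 with rfl | hy0
      · rw [if_pos rfl]
        have := one_add_pos hγ (enorm'_nonneg (W *ᵥ (0 : Fin d → ℝ)))
        positivity
      · rw [if_neg hy0]
        set eW := enorm' (W *ᵥ y) with heW
        set eU := enorm' (U2 *ᵥ y) with heU
        have heWnn : 0 ≤ eW := enorm'_nonneg _
        have heUpos : 0 < eU := pd_enorm_mulVec_pos hU2 hy0
        have hposW : 0 < 1 + γ * eW := one_add_pos hγ heWnn
        have hWU : eW ≤ ρ * eU := by
          apply sq_le_imp_le heWnn (by positivity)
          rw [mul_pow, hρ2, heU, heW, enorm'_sq, enorm'_sq]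
          exact hG4 y
        have hker : 0 ≤ (1 + γ * eW)⁻¹ * (y ⬝ᵥ z)^2 := by positivity
        rcases lt_or_ge eU (1/2) with hsmall | hbig
        · -- small case
          have hid : y ⬝ᵥ z = (U2 *ᵥ y) ⬝ᵥ (U2⁻¹ *ᵥ z) := by
            rw [dot_sym (pd_invT hU2) (U2 *ᵥ y) z, pd_cancel2 hU2]
          have hcs : (y ⬝ᵥ z)^2 ≤ eU^2 * μ := by
            rw [hid]
            refine le_trans (dot_sq_le _ _) ?_
            rw [← enorm'_sq, ← heU, hnormU]
          exact scalar_small heUpos hsmall (sq_nonneg _) hcs hμnn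
            (mul_nonneg h2γρ hker)
        · -- big case
          exact scalar_big hγ hρnn hbig heWnn hWU (sq_nonneg _) (by positivity)
    have hint1 := integrable_kLDP p hbdd hR hU2 z
    have hint2 : Integrable (fun y => μ/2
        + (2 + γ*ρ) * ((1 + γ * enorm' (W *ᵥ y))⁻¹ * (y ⬝ᵥ z)^2)) p :=
      (integrable_const (μ/2)).add ((integrable_kJDP p hbdd hR hγ W z).const_mul (2 + γ*ρ))
    have hmono := integral_mono hint1 hint2 hpw
    rw [integral_add (integrable_const (μ/2))
      ((integrable_kJDP p hbdd hR hγ W z).const_mul (2 + γ*ρ)), integral_const,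
      integral_const_mul] at hmono
    simp only [probReal_univ, measure_univ, ENNReal.toReal_one, smul_eq_mul, one_mul] at hmono
    -- combine
    have hD : (1 + γ) * lam * (z ⬝ᵥ U2⁻¹ *ᵥ z) ≤ (1 + γ) * lam * (ρ * (z ⬝ᵥ W⁻¹ *ᵥ z)) := by
      apply mul_le_mul_of_nonneg_left (hsm z)
      nlinarith
    set a : ℝ := ∫ y, (1 + γ * enorm' (W *ᵥ y))⁻¹ * (y ⬝ᵥ z)^2 ∂p with hadef
    set b : ℝ := lam * (z ⬝ᵥ W⁻¹ *ᵥ z) with hbdef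
    have hab : a + b = 1 := by rw [hadef, hbdef, hE1, hnormW]
    have hbnn : 0 ≤ b := mul_nonneg hlam.le hbWnn
    have htot : μ ≤ μ/2 + (2 + γ*ρ) * a + (1 + γ) * ρ * b := by
      have h11 : μ = (∫ y, (if y = 0 then 0 else (enorm' (U2 *ᵥ y))⁻¹ * (y ⬝ᵥ z)^2) ∂p)
          + (1 + γ) * lam * (z ⬝ᵥ U2⁻¹ *ᵥ z) := by rw [hE2, hnormU]
      have h12 : (1 + γ) * lam * (ρ * (z ⬝ᵥ W⁻¹ *ᵥ z)) = (1 + γ) * ρ * b := by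
        rw [hbdef]; ring
      calc μ = (∫ y, (if y = 0 then 0 else (enorm' (U2 *ᵥ y))⁻¹ * (y ⬝ᵥ z)^2) ∂p)
              + (1 + γ) * lam * (z ⬝ᵥ U2⁻¹ *ᵥ z) := h11
        _ ≤ (μ/2 + (2 + γ*ρ) * a) + (1 + γ) * lam * (ρ * (z ⬝ᵥ W⁻¹ *ᵥ z)) :=
            add_le_add hmono hD
        _ = μ/2 + (2 + γ*ρ) * a + (1 + γ) * ρ * b := by rw [h12]; try ring
    rw [← hρ2] at htot
    rw [← hρ2]
    exact scalar_combine hγ hρnn hJWnn hbnn hab htot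
  intro x
  have := hG4 x
  nlinarith [dot_self_nonneg' (U2 *ᵥ x), hμle, hμnn]

lemma sq_transpose {d : ℕ} {A : Matrix (Fin d) (Fin d) ℝ} (hA : Aᵀ = A) : (A^2)ᵀ = A^2 := by
  rw [pow_two, Matrix.transpose_mul, hA]

lemma quad_sq {d : ℕ} {A : Matrix (Fin d) (Fin d) ℝ} (hA : Aᵀ = A) (x : Fin d → ℝ) :
    x ⬝ᵥ (A^2) *ᵥ x = (A *ᵥ x) ⬝ᵥ (A *ᵥ x) := by
  rw [pow_two, ← Matrix.mulVec_mulVec, dot_sym hA]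

/-- `γ²(U*_{γλ})² ⪯ (W*_{γ,λ})² ⪯ 16(1+γ)²(U*_{(1+γ)λ})²`. -/
theorem stmt11 {d : ℕ} (p : Measure (Fin d → ℝ)) [IsProbabilityMeasure p]
    (hbdd : ∃ R : ℝ, ∀ᵐ x ∂p, enorm' x ≤ R)
    (lam γ : ℝ) (hlam : 0 < lam) (hγ : 0 ≤ γ)
    (U1 U2 Wstar : Matrix (Fin d) (Fin d) ℝ)
    (hU1 : U1.PosDef) (hU1fix : FLDP p (γ * lam) U1 = 1)
    (hU1uniq : ∀ U : Matrix (Fin d) (Fin d) ℝ, U.PosDef → FLDP p (γ * lam) U = 1 → U = U1)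
    (hU2 : U2.PosDef) (hU2fix : FLDP p ((1 + γ) * lam) U2 = 1)
    (hU2uniq : ∀ U : Matrix (Fin d) (Fin d) ℝ, U.PosDef → FLDP p ((1 + γ) * lam) U = 1 → U = U2)
    (hW : Wstar.PosDef) (hWfix : FJDP p γ lam Wstar = 1)
    (hWuniq : ∀ W : Matrix (Fin d) (Fin d) ℝ, W.PosDef → FJDP p γ lam W = 1 → W = Wstar) :
    (Wstar^2 - γ^2 • U1^2).PosSemidef
    ∧ ((16 * (1 + γ)^2) • U2^2 - Wstar^2).PosSemidef := by
  obtain ⟨R0, hbdd0⟩ := hbdd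
  have hbddR : ∀ᵐ x ∂p, enorm' x ≤ max R0 0 :=
    hbdd0.mono fun y hy => le_trans hy (le_max_left _ _)
  have hR : (0:ℝ) ≤ max R0 0 := le_max_right _ _
  rcases Nat.eq_zero_or_pos d with hd | hd
  · subst hd
    constructor <;> refine Matrix.PosSemidef.of_dotProduct_mulVec_nonneg ?_ ?_
    · ext i j; exact i.elim0
    · intro x
      simp [dotProduct]
    · ext i j; exact i.elim0
    · intro x
      simp [dotProduct]
  · have hne : Nonempty (Fin d) := ⟨⟨0, hd⟩⟩
    have key1 : ∀ x, γ^2 * ((U1 *ᵥ x) ⬝ᵥ (U1 *ᵥ x)) ≤ (Wstar *ᵥ x) ⬝ᵥ (Wstar *ᵥ x) := by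
      rcases eq_or_lt_of_le hγ with h0 | h0
      · intro x
        rw [← h0]
        simpa using dot_self_nonneg' (Wstar *ᵥ x)
      · exact lower_key p hbddR hR hlam h0 hU1 hW hU1fix hWfix
    have key2 := upper_key p hbddR hR hlam hγ hU2 hW hU2fix hWfix
    constructor
    · refine Matrix.PosSemidef.of_dotProduct_mulVec_nonneg (herm_of_transpose ?_) ?_
      · rw [Matrix.transpose_sub, Matrix.transpose_smul, sq_transpose (pd_tEq hW),
          sq_transpose (pd_tEq hU1)]
      · intro x
        rw [star_eq_self]
        rw [Matrix.sub_mulVec, dotProduct_sub, Matrix.smul_mulVec, dotProduct_smul,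
          smul_eq_mul, quad_sq (pd_tEq hW), quad_sq (pd_tEq hU1)]
        linarith [key1 x]
    · refine Matrix.PosSemidef.of_dotProduct_mulVec_nonneg (herm_of_transpose ?_) ?_
      · rw [Matrix.transpose_sub, Matrix.transpose_smul, sq_transpose (pd_tEq hW),
          sq_transpose (pd_tEq hU2)]
      · intro x
        rw [star_eq_self]
        rw [Matrix.sub_mulVec, dotProduct_sub, Matrix.smul_mulVec, dotProduct_smul,
          smul_eq_mul, quad_sq (pd_tEq hW), quad_sq (pd_tEq hU2)]
        linarith [key2 x]
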